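/- (Sufficient decrease of PALM.) Let F(x1,x2) = H(x1,x2) + f(x1) + g(x2) with inf F > −∞, where f, g are proper, lower semicontinuous and bounded below, H is continuously differentiable, for every x2 the map x1 ↦ ∇_{x1}H(x1,x2) is globally L1(x2)-Lipschitz, and for every x1 the map x2 ↦ ∇_{x2}H(x1,x2) is globally L2(x1)-Lipschitz. Let (x1^k, x2^k)_k be generated by PALM: x1^{k+1} ∈ prox_{τ1^k}^f( x1^k − (1/τ1^k)∇_{x1}H(x1^k, x2^k) ) and x2^{k+1} ∈ prox_{τ2^k}^g( x2^k − (1/τ2^k)∇_{x2}H(x1^{k+1}, x2^k) ), with step sizes τ1^k ≥ γ1 L1(x2^k) and τ2^k ≥ γ2 L2(x1^{k+1}) for some γ1, γ2 > 1, and suppose L1(x2^k) ≥ λ1⁻ > 0 and L2(x1^{k+1}) ≥ λ2⁻ > 0 for all k. Then with η = min{(γ1−1)λ1⁻, (γ2−1)λ2⁻}, the sequence (F(x1^k,x2^k))_k is nonincreasing and (η/2)‖(x1^{k+1},x2^{k+1}) − (x1^k,x2^k)‖² ≤ F(x1^k,x2^k) − F(x1^{k+1},x2^{k+1}) for all k.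 -/

import Mathlib

open Filter Topology InnerProductSpace intervalIntegral

open Filter Topology InnerProductSpace intervalIntegral

lemma my_descent {E : Type*} [NormedAddCommGroup E] [InnerProductSpace ℝ E] [CompleteSpace E]
    (φ : E → ℝ) (hφ : ContDiff ℝ 1 φ) (L : ℝ) (hL0 : 0 ≤ L)
    (hL : LipschitzWith L.toNNReal (fun x => gradient φ x)) (x y : E) :
    φ y ≤ φ x + inner ℝ (gradient φ x) (y - x) + L / 2 * ‖y - x‖ ^ 2 := by
  set v := y - x with hv
  set g' : ℝ → ℝ := fun t => inner ℝ (gradient φ (x + t • v)) v with hg'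
  have hderiv : ∀ t : ℝ, HasDerivAt (fun t : ℝ => φ (x + t • v)) (g' t) t := by
    intro t
    have hline : HasDerivAt (fun t : ℝ => x + t • v) v t := by
      simpa using ((hasDerivAt_id t).smul_const v).const_add x
    have hdiff : DifferentiableAt ℝ φ (x + t • v) := hφ.differentiable one_ne_zero _
    have hgrad := hdiff.hasGradientAt
    have hfd : HasFDerivAt φ (toDual ℝ E (gradient φ (x + t • v))) (x + t • v) :=
      hasGradientAt_iff_hasFDerivAt.1 hgrad
    have := hfd.comp_hasDerivAt t hline
    have e : g' t = (toDual ℝ E (gradient φ (x + t • v))) v := by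
      simp [toDual_apply_apply, hg']
    rw [e]
    exact this
  have hgcont : Continuous g' := by
    have : Continuous fun t : ℝ => gradient φ (x + t • v) :=
      hL.continuous.comp (by continuity)
    exact (this.inner continuous_const)
  have hint : φ (x + (1:ℝ) • v) - φ (x + (0:ℝ) • v) = ∫ t in (0:ℝ)..1, g' t :=
    (integral_eq_sub_of_hasDerivAt (fun t _ => hderiv t)
      (hgcont.intervalIntegrable 0 1)).symm
  have hbound : ∀ t ∈ Set.Icc (0:ℝ) 1, g' t ≤ g' 0 + L * t * ‖v‖ ^ 2 := by
    intro t ht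
    have h1 : g' t - g' 0 = inner ℝ (gradient φ (x + t • v) - gradient φ (x + (0:ℝ) • v)) v := by
      simp [hg', inner_sub_left]
    have h2 : ‖gradient φ (x + t • v) - gradient φ (x + (0:ℝ) • v)‖ ≤ L * (t * ‖v‖) := by
      have := hL.dist_le_mul (x + t • v) (x + (0:ℝ) • v)
      rw [dist_eq_norm, dist_eq_norm] at this
      calc ‖gradient φ (x + t • v) - gradient φ (x + (0:ℝ) • v)‖
          ≤ L.toNNReal * ‖(x + t • v) - (x + (0:ℝ) • v)‖ := this
        _ = L * (t * ‖v‖) := by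
            rw [Real.coe_toNNReal _ hL0]
            congr 1
            simp [norm_smul, abs_of_nonneg ht.1]
    have h3 : inner ℝ (gradient φ (x + t • v) - gradient φ (x + (0:ℝ) • v)) v
        ≤ L * (t * ‖v‖) * ‖v‖ :=
      le_trans (real_inner_le_norm _ _) (by
        apply mul_le_mul_of_nonneg_right h2 (norm_nonneg v))
    nlinarith [h1, h3]
  have hc2 : Continuous fun t : ℝ => L * t * ‖v‖ ^ 2 := by continuity
  have hintle : ∫ t in (0:ℝ)..1, g' t ≤ ∫ t in (0:ℝ)..1, (g' 0 + L * t * ‖v‖ ^ 2) := by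
    apply integral_mono_on (by norm_num)
      (hgcont.intervalIntegrable 0 1)
      ((continuous_const.add hc2).intervalIntegrable 0 1)
      hbound
  have hval : ∫ t in (0:ℝ)..1, (g' 0 + L * t * ‖v‖ ^ 2) = g' 0 + L / 2 * ‖v‖ ^ 2 := by
    rw [intervalIntegral.integral_add (intervalIntegrable_const)
      (hc2.intervalIntegrable 0 1)]
    simp only [intervalIntegral.integral_const, smul_eq_mul]
    have : ∫ t in (0:ℝ)..1, L * t * ‖v‖ ^ 2 = L / 2 * ‖v‖ ^ 2 := by
      have : (fun t : ℝ => L * t * ‖v‖ ^ 2) = fun t : ℝ => (L * ‖v‖ ^ 2) * t := by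
        ext t; ring
      rw [this, intervalIntegral.integral_const_mul, integral_id]
      ring
    rw [this]; ring
  have hg0 : g' 0 = inner ℝ (gradient φ x) (y - x) := by simp [hg', hv]
  have : φ y - φ x ≤ g' 0 + L / 2 * ‖v‖ ^ 2 := by
    have e : φ (x + (1:ℝ) • v) = φ y := by simp [hv]
    have e0 : φ (x + (0:ℝ) • v) = φ x := by simp
    rw [e, e0] at hint
    rw [hint]
    exact le_trans hintle (le_of_eq hval)
  rw [hg0] at this
  linarith [this]

lemma my_block {E : Type*} [NormedAddCommGroup E] [InnerProductSpace ℝ E] [CompleteSpace E]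
    (φ : E → ℝ) (hφ : ContDiff ℝ 1 φ) (L τ : ℝ)
    (hL : LipschitzWith L.toNNReal (fun x => gradient φ x)) (hLpos : 0 < L) (hτ : L < τ)
    (f : E → EReal) (x x' : E)
    (hprox : ∀ y, ((τ / 2 * ‖(x - τ⁻¹ • gradient φ x) - x'‖ ^ 2 : ℝ) : EReal) + f x' ≤
                 ((τ / 2 * ‖(x - τ⁻¹ • gradient φ x) - y‖ ^ 2 : ℝ) : EReal) + f y) :
    ((φ x' : ℝ) : EReal) + f x' + (((τ - L) / 2 * ‖x' - x‖ ^ 2 : ℝ) : EReal) ≤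
      ((φ x : ℝ) : EReal) + f x := by
  have hτ0 : (0:ℝ) < τ := lt_trans hLpos hτ
  set G := gradient φ x with hG
  set C : ℝ := τ / 2 * ‖x' - x‖ ^ 2 + inner ℝ G (x' - x) with hC
  -- algebraic identity
  have hA : τ / 2 * ‖(x - τ⁻¹ • G) - x'‖ ^ 2
      = τ / 2 * ‖(x - τ⁻¹ • G) - x‖ ^ 2 + C := by
    have e1' : (x - τ⁻¹ • G) - x' = -((x' - x) + τ⁻¹ • G) := by module
    have e2 : (x - τ⁻¹ • G) - x = -(τ⁻¹ • G) := by module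
    rw [e1', e2, norm_neg, norm_neg, norm_add_sq_real]
    rw [hC, norm_smul, real_inner_smul_right]
    have : ‖(τ⁻¹ : ℝ)‖ = τ⁻¹ := by
      rw [Real.norm_eq_abs, abs_of_pos (by positivity)]
    rw [this, real_inner_comm (x' - x) G]
    field_simp
    ring
  -- prox inequality specialized at y = x
  have h1 : ((C : ℝ) : EReal) + f x' ≤ f x := by
    set B : EReal := ((τ / 2 * ‖(x - τ⁻¹ • G) - x‖ ^ 2 : ℝ) : EReal) with hB
    have h := hprox x
    rw [hA, EReal.coe_add] at h
    have h'' : ((C : ℝ) : EReal) + f x' + B ≤ f x + B := by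
      have eL : ((C : ℝ) : EReal) + f x' + B = B + ((C : ℝ) : EReal) + f x' := by abel
      have eR : f x + B = B + f x := by abel
      rw [eL, eR]
      exact h
    exact (EReal.addLECancellable_coe _).add_le_add_iff_right.1 h''
  -- descent lemma
  have hd : φ x' ≤ φ x + inner ℝ G (x' - x) + L / 2 * ‖x' - x‖ ^ 2 :=
    my_descent φ hφ L hLpos.le hL x x'
  -- real inequality
  have hr : φ x' + (τ - L) / 2 * ‖x' - x‖ ^ 2 ≤ φ x + C := by
    rw [hC]; nlinarith [hd]
  calc ((φ x' : ℝ) : EReal) + f x' + (((τ - L) / 2 * ‖x' - x‖ ^ 2 : ℝ) : EReal)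
      = ((φ x' + (τ - L) / 2 * ‖x' - x‖ ^ 2 : ℝ) : EReal) + f x' := by
        rw [EReal.coe_add]; abel
    _ ≤ ((φ x + C : ℝ) : EReal) + f x' := by
        exact add_le_add_left (EReal.coe_le_coe_iff.2 hr) _
    _ = ((φ x : ℝ) : EReal) + (((C : ℝ) : EReal) + f x') := by
        rw [EReal.coe_add]; abel
    _ ≤ ((φ x : ℝ) : EReal) + f x := add_le_add_right h1 _

/-- sufficient decrease of PALM. -/
theorem palm_sufficient_decrease (d1 d2 : ℕ)
    (H : EuclideanSpace ℝ (Fin d1) × EuclideanSpace ℝ (Fin d2) → ℝ)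
    (hH : ContDiff ℝ 1 H)
    (f : EuclideanSpace ℝ (Fin d1) → EReal)
    (g : EuclideanSpace ℝ (Fin d2) → EReal)
    (hfbot : ∀ x, f x ≠ ⊥) (hftop : ∃ x, f x ≠ ⊤) (hflsc : LowerSemicontinuous f)
    (hfbdd : ∃ c : ℝ, ∀ x, (c : EReal) ≤ f x)
    (hgbot : ∀ x, g x ≠ ⊥) (hgtop : ∃ x, g x ≠ ⊤) (hglsc : LowerSemicontinuous g)
    (hgbdd : ∃ c : ℝ, ∀ x, (c : EReal) ≤ g x)
    (F : EuclideanSpace ℝ (Fin d1) × EuclideanSpace ℝ (Fin d2) → EReal)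
    (hF : ∀ p, F p = (H p : EReal) + f p.1 + g p.2)
    (hFbdd : ∃ c : ℝ, ∀ p, (c : EReal) ≤ F p)
    -- partial Lipschitz constants
    (L1 : EuclideanSpace ℝ (Fin d2) → ℝ) (L2 : EuclideanSpace ℝ (Fin d1) → ℝ)
    (hL1 : ∀ b, LipschitzWith (L1 b).toNNReal
      (fun a => gradient (fun a' => H (a', b)) a))
    (hL2 : ∀ a, LipschitzWith (L2 a).toNNReal
      (fun b => gradient (fun b' => H (a, b')) b))
    -- the PALM iterates
    (x1 : ℕ → EuclideanSpace ℝ (Fin d1)) (x2 : ℕ → EuclideanSpace ℝ (Fin d2))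
    (τ1 τ2 : ℕ → ℝ)
    (hstep1 : ∀ k, ∀ y : EuclideanSpace ℝ (Fin d1),
      ((τ1 k / 2 *
          ‖(x1 k - (τ1 k)⁻¹ • gradient (fun a => H (a, x2 k)) (x1 k)) - x1 (k+1)‖ ^ 2 : ℝ)
        : EReal) + f (x1 (k+1)) ≤
      ((τ1 k / 2 *
          ‖(x1 k - (τ1 k)⁻¹ • gradient (fun a => H (a, x2 k)) (x1 k)) - y‖ ^ 2 : ℝ)
        : EReal) + f y)
    (hstep2 : ∀ k, ∀ y : EuclideanSpace ℝ (Fin d2),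
      ((τ2 k / 2 *
          ‖(x2 k - (τ2 k)⁻¹ • gradient (fun b => H (x1 (k+1), b)) (x2 k)) - x2 (k+1)‖ ^ 2 : ℝ)
        : EReal) + g (x2 (k+1)) ≤
      ((τ2 k / 2 *
          ‖(x2 k - (τ2 k)⁻¹ • gradient (fun b => H (x1 (k+1), b)) (x2 k)) - y‖ ^ 2 : ℝ)
        : EReal) + g y)
    -- step size conditions
    (γ1 γ2 : ℝ) (hγ1 : 1 < γ1) (hγ2 : 1 < γ2)
    (hτ1 : ∀ k, γ1 * L1 (x2 k) ≤ τ1 k)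
    (hτ2 : ∀ k, γ2 * L2 (x1 (k+1)) ≤ τ2 k)
    (lam1 lam2 : ℝ) (hlam1 : 0 < lam1) (hlam2 : 0 < lam2)
    (hL1low : ∀ k, lam1 ≤ L1 (x2 k))
    (hL2low : ∀ k, lam2 ≤ L2 (x1 (k+1)))
    (η : ℝ) (hη : η = min ((γ1 - 1) * lam1) ((γ2 - 1) * lam2)) :
    (∀ k, F (x1 (k+1), x2 (k+1)) ≤ F (x1 k, x2 k)) ∧
    (∀ k, F (x1 (k+1), x2 (k+1)) +
        ((η / 2 * (‖x1 (k+1) - x1 k‖ ^ 2 + ‖x2 (k+1) - x2 k‖ ^ 2) : ℝ) : EReal) ≤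
      F (x1 k, x2 k)) := by
  -- main proof
  have hη0 : 0 ≤ η := by
    rw [hη]
    apply le_min <;> nlinarith
  have key : ∀ k, F (x1 (k+1), x2 (k+1)) +
      ((η / 2 * (‖x1 (k+1) - x1 k‖ ^ 2 + ‖x2 (k+1) - x2 k‖ ^ 2) : ℝ) : EReal) ≤
      F (x1 k, x2 k) := by
    intro k
    have hL1pos : 0 < L1 (x2 k) := lt_of_lt_of_le hlam1 (hL1low k)
    have hL2pos : 0 < L2 (x1 (k+1)) := lt_of_lt_of_le hlam2 (hL2low k)
    have hτ1k : L1 (x2 k) < τ1 k := by nlinarith [hτ1 k]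
    have hτ2k : L2 (x1 (k+1)) < τ2 k := by nlinarith [hτ2 k]
    have hφ1 : ContDiff ℝ 1 (fun a => H (a, x2 k)) :=
      hH.comp (contDiff_id.prodMk contDiff_const)
    have hφ2 : ContDiff ℝ 1 (fun b => H (x1 (k+1), b)) :=
      hH.comp (contDiff_const.prodMk contDiff_id)
    have e1 := my_block (fun a => H (a, x2 k)) hφ1 (L1 (x2 k)) (τ1 k)
      (hL1 (x2 k)) hL1pos hτ1k f (x1 k) (x1 (k+1)) (hstep1 k)
    have e2 := my_block (fun b => H (x1 (k+1), b)) hφ2 (L2 (x1 (k+1))) (τ2 k)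
      (hL2 (x1 (k+1))) hL2pos hτ2k g (x2 k) (x2 (k+1)) (hstep2 k)
    set c1 : ℝ := (τ1 k - L1 (x2 k)) / 2 * ‖x1 (k+1) - x1 k‖ ^ 2 with hc1
    set c2 : ℝ := (τ2 k - L2 (x1 (k+1))) / 2 * ‖x2 (k+1) - x2 k‖ ^ 2 with hc2
    -- chain the two block inequalities
    have chain : F (x1 (k+1), x2 (k+1)) + ((c1 : ℝ) : EReal) + ((c2 : ℝ) : EReal)
        ≤ F (x1 k, x2 k) := by
      rw [hF (x1 (k+1), x2 (k+1)), hF (x1 k, x2 k)]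
      calc ((H (x1 (k+1), x2 (k+1)) : ℝ) : EReal) + f (x1 (k+1)) + g (x2 (k+1))
            + ((c1 : ℝ) : EReal) + ((c2 : ℝ) : EReal)
          = (((H (x1 (k+1), x2 (k+1)) : ℝ) : EReal) + g (x2 (k+1)) + ((c2 : ℝ) : EReal))
            + (f (x1 (k+1)) + ((c1 : ℝ) : EReal)) := by abel
        _ ≤ (((H (x1 (k+1), x2 k) : ℝ) : EReal) + g (x2 k))
            + (f (x1 (k+1)) + ((c1 : ℝ) : EReal)) := add_le_add_left e2 _
        _ = (((H (x1 (k+1), x2 k) : ℝ) : EReal) + f (x1 (k+1)) + ((c1 : ℝ) : EReal))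
            + g (x2 k) := by abel
        _ ≤ (((H (x1 k, x2 k) : ℝ) : EReal) + f (x1 k)) + g (x2 k) :=
            add_le_add_left e1 _
    -- compare the real constants
    have hreal : η / 2 * (‖x1 (k+1) - x1 k‖ ^ 2 + ‖x2 (k+1) - x2 k‖ ^ 2) ≤ c1 + c2 := by
      have h1 : η ≤ τ1 k - L1 (x2 k) := by
        have := min_le_left ((γ1 - 1) * lam1) ((γ2 - 1) * lam2)
        rw [← hη] at this
        nlinarith [hτ1 k, hL1low k]
      have h2 : η ≤ τ2 k - L2 (x1 (k+1)) := by
        have := min_le_right ((γ1 - 1) * lam1) ((γ2 - 1) * lam2)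
        rw [← hη] at this
        nlinarith [hτ2 k, hL2low k]
      rw [hc1, hc2]
      nlinarith [sq_nonneg ‖x1 (k+1) - x1 k‖, sq_nonneg ‖x2 (k+1) - x2 k‖]
    calc F (x1 (k+1), x2 (k+1)) +
          ((η / 2 * (‖x1 (k+1) - x1 k‖ ^ 2 + ‖x2 (k+1) - x2 k‖ ^ 2) : ℝ) : EReal)
        ≤ F (x1 (k+1), x2 (k+1)) + ((c1 + c2 : ℝ) : EReal) :=
          add_le_add_right (EReal.coe_le_coe_iff.2 hreal) _
      _ = F (x1 (k+1), x2 (k+1)) + ((c1 : ℝ) : EReal) + ((c2 : ℝ) : EReal) := by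
          rw [EReal.coe_add]; abel
      _ ≤ F (x1 k, x2 k) := chain
  constructor
  · intro k
    have := key k
    refine le_trans ?_ this
    apply le_add_of_nonneg_right
    have : (0:ℝ) ≤ η / 2 * (‖x1 (k+1) - x1 k‖ ^ 2 + ‖x2 (k+1) - x2 k‖ ^ 2) := by positivity
    exact_mod_cast this
  · exact key
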